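/- Let P be a finite lattice, W a wide decomposable subcategory, and T ⊆ W a transfer system. There exists a model structure on P with weak equivalences W and acyclic fibrations T if and only if ᵇT ∩ W is a cotransfer system on P (i.e., closed under pushouts). -/

import Mathlib

variable {P : Type*}

section Defs
variable [Lattice P]

/-- A wide subcategory of the poset category of `P`: contains all identities,
refines `≤`, and is closed under composition. -/
def IsWide (R : P → P → Prop) : Prop :=
  (∀ x, R x x) ∧ (∀ x y, R x y → x ≤ y) ∧ (∀ x y z, R x y → R y z → R x z)

/-- A decomposable subcategory: if a composite is in `R`, so are both factors. -/
def IsDecomposable (R : P → P → Prop) : Prop :=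
  ∀ x y z : P, x ≤ y → y ≤ z → R x z → R x y ∧ R y z

/-- A transfer system: a partial order refining `≤`, closed under restriction
(pullback) along meets. -/
def IsTransferSystem (R : P → P → Prop) : Prop :=
  (∀ x, R x x) ∧ (∀ x y z, R x y → R y z → R x z) ∧
  (∀ x y, R x y → R y x → x = y) ∧
  (∀ x y, R x y → x ≤ y) ∧
  (∀ x y z, R x y → z ≤ y → R (x ⊓ z) z)

/-- A cotransfer system: a partial order refining `≤`, closed under
cobase change (pushout) along joins. -/
def IsCotransferSystem (R : P → P → Prop) : Prop :=
  (∀ x, R x x) ∧ (∀ x y z, R x y → R y z → R x z) ∧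
  (∀ x y, R x y → R y x → x = y) ∧
  (∀ x y, R x y → x ≤ y) ∧
  (∀ x y z, R x y → x ≤ z → R z (y ⊔ z))

/-- Closed under pullbacks: the pullback of `b → d` along `c → d` is `b ⊓ c → c`. -/
def PullbackClosed (R : P → P → Prop) : Prop :=
  ∀ b c d : P, R b d → c ≤ d → R (b ⊓ c) c

/-- Closed under pushouts: the pushout of `a → b` along `a → c` is `c → b ⊔ c`. -/
def PushoutClosed (R : P → P → Prop) : Prop :=
  ∀ a b c : P, R a b → a ≤ c → R c (b ⊔ c)

/-- The left lifting class of a class `S` of morphisms of the poset category: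
pairs `(a,b)` with `a ≤ b` having the left lifting property against every
member of `S`. -/
def LLP (S : P → P → Prop) (a b : P) : Prop :=
  a ≤ b ∧ ∀ x y, S x y → a ≤ x → b ≤ y → b ≤ x

/-- The right lifting class of a class `S` of morphisms of the poset category. -/
def RLP (S : P → P → Prop) (x y : P) : Prop :=
  x ≤ y ∧ ∀ a b, S a b → a ≤ x → b ≤ y → b ≤ x

/-- A weak factorization system `(L, R)`: every morphism factors as a map in `L`
followed by a map in `R`, and `L = ᵇR`, `R = Lᵇ`. -/
def IsWFS (L R : P → P → Prop) : Prop :=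
  (∀ x y : P, x ≤ y → ∃ z, L x z ∧ R z y) ∧
  (∀ a b, L a b ↔ LLP R a b) ∧
  (∀ x y, R x y ↔ RLP L x y)

/-- The composite class `S ∘ T` (first `T`, then `S`). -/
def Comp (S T : P → P → Prop) (x z : P) : Prop :=
  ∃ y, T x y ∧ S y z

/-- The two-out-of-three property for a class of morphisms. -/
def TwoOutOfThree (W : P → P → Prop) : Prop :=
  ∀ x y z : P, x ≤ y → y ≤ z →
    ((W x y → W y z → W x z) ∧ (W x y → W x z → W y z) ∧ (W y z → W x z → W x y))

/-- A model structure on the poset category of `P`, given by acyclic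
cofibrations, fibrations, cofibrations and acyclic fibrations: two weak
factorization systems `(AC, F)` and `(C, AF)` with `AC ⊆ C`, such that
`W := AF ∘ AC` satisfies two-out-of-three. -/
def IsModel (AC F C AF : P → P → Prop) : Prop :=
  IsWFS AC F ∧ IsWFS C AF ∧ (∀ x y, AC x y → C x y) ∧
  TwoOutOfThree (Comp AF AC)

/-- `T` occurs as the class of acyclic fibrations of a model structure whose
class of weak equivalences is `W`. -/
def OccursAsAF (W T : P → P → Prop) : Prop :=
  ∃ AC F C, IsModel AC F C T ∧ ∀ x y, Comp T AC x y ↔ W x y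

end Defs

section Aux
variable [Lattice P]

lemma llp_refl (S : P → P → Prop) (x : P) : LLP S x x :=
  ⟨le_refl x, fun _ _ _ hxa _ => hxa⟩

lemma llp_trans {S : P → P → Prop} {x y z : P} (h1 : LLP S x y) (h2 : LLP S y z) :
    LLP S x z :=
  ⟨h1.1.trans h2.1, fun a b hab hxa hzb =>
    h2.2 a b hab (h1.2 a b hab hxa (h2.1.trans hzb)) hzb⟩

lemma llp_pushout {S : P → P → Prop} {a b c : P} (h : LLP S a b) (hac : a ≤ c) :
    LLP S c (b ⊔ c) :=
  ⟨le_sup_right, fun x y hxy hcx hby =>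
    sup_le (h.2 x y hxy (hac.trans hcx) (le_sup_left.trans hby)) hcx⟩

variable [Fintype P]

lemma transfer_factor {T : P → P → Prop} (hT : IsTransferSystem T)
    (x y : P) (hxy : x ≤ y) : ∃ z, LLP T x z ∧ T z y := by
  classical
  obtain ⟨hrefl, htrans, _, hle, hres⟩ := hT
  let s : Finset P := Finset.univ.filter (fun w => x ≤ w ∧ T w y)
  have hy : y ∈ s := by simp [s, hxy, hrefl y]
  obtain ⟨z, hz, hzmin⟩ : ∃ z ∈ s, ∀ w ∈ s, ¬ w < z := by
    obtain ⟨z, hz⟩ := Finset.exists_minimal (s := s) ⟨y, hy⟩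
    exact ⟨z, hz.1, fun w hw hlt => lt_irrefl _ (lt_of_lt_of_le hlt (hz.2 hw hlt.le))⟩
  simp only [s, Finset.mem_filter, Finset.mem_univ, true_and] at hz
  refine ⟨z, ⟨hz.1, ?_⟩, hz.2⟩
  intro a b hab hxa hzb
  have h1 : T (a ⊓ z) z := hres a b z hab hzb
  have h2 : T (a ⊓ z) y := htrans _ _ _ h1 hz.2
  have hmem : a ⊓ z ∈ s := by
    simp only [s, Finset.mem_filter, Finset.mem_univ, true_and]
    exact ⟨le_inf hxa hz.1, h2⟩
  have heq : a ⊓ z = z := by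
    by_contra hne
    exact hzmin _ hmem (lt_of_le_of_ne inf_le_right hne)
  exact heq ▸ inf_le_left

lemma transfer_wfs {T : P → P → Prop} (hT : IsTransferSystem T) :
    IsWFS (LLP T) T := by
  refine ⟨fun x y h => transfer_factor hT x y h, fun a b => Iff.rfl, fun x y => ?_⟩
  constructor
  · intro hxy
    exact ⟨hT.2.2.2.1 _ _ hxy, fun a b hab hax hby => hab.2 x y hxy hax hby⟩
  · rintro ⟨hxy, hlift⟩
    obtain ⟨z, hz1, hz2⟩ := transfer_factor hT x y hxy
    have hzx : z ≤ x := hlift x z hz1 (le_refl x) (hT.2.2.2.1 _ _ hz2)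
    have hzz : z = x := le_antisymm hzx hz1.1
    exact hzz ▸ hz2

lemma cotransfer_factor {R : P → P → Prop} (hR : IsCotransferSystem R)
    (x y : P) (hxy : x ≤ y) : ∃ z, R x z ∧ RLP R z y := by
  classical
  obtain ⟨hrefl, htrans, _, hle, hpush⟩ := hR
  let s : Finset P := Finset.univ.filter (fun w => R x w ∧ w ≤ y)
  have hx : x ∈ s := by simp [s, hxy, hrefl x]
  obtain ⟨z, hz, hzmax⟩ : ∃ z ∈ s, ∀ w ∈ s, ¬ z < w := by
    obtain ⟨z, hz⟩ := Finset.exists_maximal (s := s) ⟨x, hx⟩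
    exact ⟨z, hz.1, fun w hw hlt => lt_irrefl _ (lt_of_lt_of_le hlt (hz.2 hw hlt.le))⟩
  simp only [s, Finset.mem_filter, Finset.mem_univ, true_and] at hz
  refine ⟨z, hz.1, hz.2, ?_⟩
  intro a b hab haz hby
  have h1 : R z (b ⊔ z) := hpush a b z hab haz
  have hmem : b ⊔ z ∈ s := by
    simp only [s, Finset.mem_filter, Finset.mem_univ, true_and]
    exact ⟨htrans _ _ _ hz.1 h1, sup_le hby hz.2⟩
  have heq : b ⊔ z = z := by
    by_contra hne
    exact hzmax _ hmem (lt_of_le_of_ne le_sup_right (fun h => hne h.symm))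
  exact le_sup_left.trans heq.le

lemma cotransfer_wfs {R : P → P → Prop} (hR : IsCotransferSystem R) :
    IsWFS R (RLP R) := by
  refine ⟨fun x y h => cotransfer_factor hR x y h, fun a b => ?_, fun x y => Iff.rfl⟩
  constructor
  · intro hab
    exact ⟨hR.2.2.2.1 _ _ hab, fun x y hxy hax hby => hxy.2 a b hab hax hby⟩
  · rintro ⟨hab, hlift⟩
    obtain ⟨z, hz1, hz2⟩ := cotransfer_factor hR a b hab
    have hbz : b ≤ z := hlift z b hz2 (hR.2.2.2.1 _ _ hz1) (le_refl b)
    have hzz : z = b := le_antisymm hz2.1 hbz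
    exact hzz ▸ hz1

end Aux

/-- There is a model structure with weak equivalences `W` and acyclic
fibrations `T` if and only if `ᵇT ∩ W` is a cotransfer system. -/
theorem exists_model_iff_cotransfer [Lattice P] [Fintype P]
    (W T : P → P → Prop) (hWw : IsWide W) (hWd : IsDecomposable W)
    (hT : IsTransferSystem T) (hTW : ∀ x y, T x y → W x y) :
    (∃ AC F C, IsModel AC F C T ∧ ∀ x y, Comp T AC x y ↔ W x y) ↔
      IsCotransferSystem (fun x y => LLP T x y ∧ W x y) := by
  constructor
  · -- forward direction
    rintro ⟨AC, F, C, ⟨hWFS1, hWFS2, hACC, h23⟩, hComp⟩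
    -- AC ⊆ W
    have hACW : ∀ a b, AC a b → W a b := fun a b hab =>
      (hComp a b).mp ⟨b, hab, hT.1 b⟩
    -- AC a b → a ≤ b
    have hACle : ∀ a b, AC a b → a ≤ b := fun a b hab =>
      ((hWFS2.2.1 a b).mp (hACC a b hab)).1
    -- F ∩ W ⊆ T
    have hFWT : ∀ z y, F z y → W z y → T z y := by
      intro z y hF hW
      obtain ⟨u, hACzu, hTuy⟩ := (hComp z y).mpr hW
      have hrlp := (hWFS1.2.2 z y).mp hF
      have huz : u ≤ z := hrlp.2 z u hACzu (le_refl z) (hT.2.2.2.1 _ _ hTuy)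
      have : u = z := le_antisymm huz (hACle z u hACzu)
      exact this ▸ hTuy
    -- LLP T ∩ W ⊆ AC
    have hkey : ∀ x y, LLP T x y → W x y → AC x y := by
      intro x y hL hW
      obtain ⟨z, hACxz, hFzy⟩ := hWFS1.1 x y hL.1
      have hxz : x ≤ z := hACle x z hACxz
      have hzy : z ≤ y := ((hWFS1.2.2 z y).mp hFzy).1
      have hWxz : W x z := hACW x z hACxz
      have hWzy : W z y := (hComp z y).mp
        ((h23 x z y hxz hzy).2.1 ((hComp x z).mpr hWxz) ((hComp x y).mpr hW))
      have hTzy : T z y := hFWT z y hFzy hWzy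
      have hyz : y ≤ z := hL.2 z y hTzy hxz (le_refl y)
      have : z = y := le_antisymm hzy hyz
      exact this ▸ hACxz
    refine ⟨fun x => ⟨llp_refl T x, hWw.1 x⟩,
      fun x y z h1 h2 => ⟨llp_trans h1.1 h2.1, hWw.2.2 x y z h1.2 h2.2⟩,
      fun x y h1 h2 => le_antisymm h1.1.1 h2.1.1,
      fun x y h => h.1.1, ?_⟩
    intro x y z h hxz
    have hAC : AC x y := hkey x y h.1 h.2
    have hLF : LLP F x y := (hWFS1.2.1 x y).mp hAC
    have hLF2 : LLP F z (y ⊔ z) := llp_pushout hLF hxz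
    have hAC2 : AC z (y ⊔ z) := (hWFS1.2.1 z (y ⊔ z)).mpr hLF2
    exact ⟨llp_pushout h.1 hxz, hACW _ _ hAC2⟩
  · -- backward direction
    intro hco
    refine ⟨fun x y => LLP T x y ∧ W x y,
      RLP (fun x y => LLP T x y ∧ W x y), LLP T,
      ⟨cotransfer_wfs hco, transfer_wfs hT, fun x y h => h.1, ?_⟩, ?_⟩
    · -- two out of three
      have hiff : ∀ x y, Comp T (fun x y => LLP T x y ∧ W x y) x y ↔ W x y := by
        intro x y
        constructor
        · rintro ⟨z, ⟨_, hWxz⟩, hTzy⟩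
          exact hWw.2.2 x z y hWxz (hTW z y hTzy)
        · intro hW
          obtain ⟨z, hL, hTzy⟩ := transfer_factor hT x y (hWw.2.1 x y hW)
          exact ⟨z, ⟨hL, (hWd x z y hL.1 (hT.2.2.2.1 _ _ hTzy) hW).1⟩, hTzy⟩
      intro x y z hxy hyz
      rw [hiff x y, hiff y z, hiff x z]
      exact ⟨fun h1 h2 => hWw.2.2 x y z h1 h2,
        fun _ h => (hWd x y z hxy hyz h).2,
        fun _ h => (hWd x y z hxy hyz h).1⟩
    · -- Comp T AC ↔ W
      intro x y
      constructor
      · rintro ⟨z, ⟨_, hWxz⟩, hTzy⟩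
        exact hWw.2.2 x z y hWxz (hTW z y hTzy)
      · intro hW
        obtain ⟨z, hL, hTzy⟩ := transfer_factor hT x y (hWw.2.1 x y hW)
        exact ⟨z, ⟨hL, (hWd x z y hL.1 (hT.2.2.2.1 _ _ hTzy) hW).1⟩, hTzy⟩
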